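/- arXiv:1504.08238 — 2 statements merged into one kernel-verified Lean document; each statement's English description precedes it below -/
import Mathlib

section
/- Let X and Y be Banach spaces over 𝕂 (= ℝ or ℂ), let Γ be an arbitrary nonempty set, let E be an invariant sequence space over X, and for each l ∈ Γ let F_l be a strongly invariant sequence space over 𝕂. If f : X → Y is strongly compatible with F_l^w(Y) for every l ∈ Γ, then the set G^w(E, f, (F_l)_{l∈Γ}) = { (x_j)_{j=1}^∞ ∈ E : (f(x_j))_{j=1}^∞ ∉ ⋃_{l∈Γ} F_l^w(Y) } is either empty or spaceable in E. -/
open scoped Classical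

/-- The zero-deleted sequence `x⁰`: if `x` has infinitely many nonzero coordinates, the
sequence of its nonzero coordinates in order; otherwise `0`. -/
noncomputable def zeroFree {X : Type*} [Zero X] (x : ℕ → X) : ℕ → X :=
  if {j | x j ≠ 0}.Infinite then fun k => x (Nat.nth (fun j => x j ≠ 0) k) else 0

/-- An invariant sequence space over a Banach space `X` (Definition 1.1 of the paper):
an infinite-dimensional Banach space of `X`-valued sequences such that
(b1) for `x` with `x⁰ ≠ 0`, `x ∈ E ↔ x⁰ ∈ E` and `‖x‖ ≤ K‖x⁰‖`, and
(b2) `‖x j‖ ≤ ‖x‖` for every `x ∈ E` and every `j`.  Completeness and closedness are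
expressed via the metric induced by the norm function. -/
structure InvariantSeqSpace (𝕂 : Type*) (X : Type*) [RCLike 𝕂]
    [NormedAddCommGroup X] [NormedSpace 𝕂 X] where
  carrier : Submodule 𝕂 (ℕ → X)
  norm : (ℕ → X) → ℝ
  norm_nonneg : ∀ x ∈ carrier, 0 ≤ norm x
  norm_eq_zero_iff : ∀ x ∈ carrier, (norm x = 0 ↔ x = 0)
  norm_smul : ∀ (a : 𝕂), ∀ x ∈ carrier, norm (a • x) = ‖a‖ * norm x
  norm_add_le : ∀ x ∈ carrier, ∀ y ∈ carrier, norm (x + y) ≤ norm x + norm y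
  complete : ∀ u : ℕ → ℕ → X, (∀ n, u n ∈ carrier) →
    (∀ ε : ℝ, 0 < ε → ∃ N, ∀ m ≥ N, ∀ n ≥ N, norm (u m - u n) < ε) →
    ∃ x ∈ carrier, ∀ ε : ℝ, 0 < ε → ∃ N, ∀ n ≥ N, norm (u n - x) < ε
  infiniteDimensional : ¬ Module.Finite 𝕂 carrier
  K : ℝ
  K_pos : 0 < K
  mem_iff_zeroFree_mem : ∀ x : ℕ → X, zeroFree x ≠ 0 → (x ∈ carrier ↔ zeroFree x ∈ carrier)
  norm_le_K_mul : ∀ x : ℕ → X, zeroFree x ≠ 0 → x ∈ carrier → norm x ≤ K * norm (zeroFree x)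
  coord_norm_le : ∀ x ∈ carrier, ∀ j : ℕ, ‖x j‖ ≤ norm x

/-- A strongly invariant sequence space: an invariant sequence space containing `c₀₀(X)`
and such that a sequence belongs to the space iff all of its subsequences do. -/
structure StronglyInvariantSeqSpace (𝕂 : Type*) (X : Type*) [RCLike 𝕂]
    [NormedAddCommGroup X] [NormedSpace 𝕂 X] extends InvariantSeqSpace 𝕂 X where
  c00_subset : ∀ x : ℕ → X, {j | x j ≠ 0}.Finite → x ∈ carrier
  mem_iff_subseq : ∀ x : ℕ → X,
    x ∈ carrier ↔ ∀ n : ℕ → ℕ, StrictMono n → (fun k => x (n k)) ∈ carrier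

/-- A subset `A` of an invariant sequence space `E` is spaceable if `A ∪ {0}` contains a
closed (w.r.t. the norm of `E`) infinite-dimensional linear subspace of `E`. -/
def Spaceable {𝕂 X : Type*} [RCLike 𝕂] [NormedAddCommGroup X] [NormedSpace 𝕂 X]
    (E : InvariantSeqSpace 𝕂 X) (A : Set (ℕ → X)) : Prop :=
  ∃ V : Submodule 𝕂 (ℕ → X), V ≤ E.carrier ∧ ¬ Module.Finite 𝕂 V ∧
    (V : Set (ℕ → X)) ⊆ A ∪ {0} ∧
    ∀ u : ℕ → ℕ → X, (∀ n, u n ∈ V) → ∀ z ∈ E.carrier,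
      (∀ ε : ℝ, 0 < ε → ∃ N, ∀ n ≥ N, E.norm (u n - z) < ε) → z ∈ V

/-- For an invariant sequence space `F` over the scalar field `𝕂` and a Banach space `Y`,
`F^w(Y) = {(x_j) ∈ Y^ℕ : (φ(x_j))_j ∈ F for every φ ∈ Y'}`. -/
def weakSpace {𝕂 : Type*} [RCLike 𝕂] (F : InvariantSeqSpace 𝕂 𝕂)
    (Y : Type*) [NormedAddCommGroup Y] [NormedSpace 𝕂 Y] : Set (ℕ → Y) :=
  {x | ∀ φ : Y →L[𝕂] 𝕂, (fun j => φ (x j)) ∈ F.carrier}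

/-- `f : X → Y` with `f 0 = 0` is strongly compatible with `F^w(Y)` if `φ ∘ f` is
compatible with `F` for every continuous linear functional `φ : Y → 𝕂`. -/
def StronglyCompatible {𝕂 X Y : Type*} [RCLike 𝕂]
    [NormedAddCommGroup X] [NormedSpace 𝕂 X] [NormedAddCommGroup Y] [NormedSpace 𝕂 Y]
    (f : X → Y) (F : InvariantSeqSpace 𝕂 𝕂) : Prop :=
  f 0 = 0 ∧ ∀ (φ : Y →L[𝕂] 𝕂) (x : ℕ → X) (a : 𝕂), a ≠ 0 →
    (fun j => φ (f (x j))) ∉ F.carrier → (fun j => φ (f (a • x j))) ∉ F.carrier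

section Aux

/-- If `P` is the image of `Q` under a strictly monotone map `g`, then the `n`-th element
of `P` is `g` of the `n`-th element of `Q`. -/
lemma nth_comp_strictMono {g : ℕ → ℕ} (hg : StrictMono g) {Q P : ℕ → Prop}
    (hQ : (setOf Q).Infinite) (hP : ∀ j, P j ↔ ∃ k, Q k ∧ g k = j) (n : ℕ) :
    Nat.nth P n = g (Nat.nth Q n) := by
  have hPQ : setOf P = g '' setOf Q := by
    ext j
    simp only [Set.mem_setOf_eq, Set.mem_image, hP j]
    exact hP j
  have hPinf : (setOf P).Infinite := by
    rw [hPQ]; exact hQ.image hg.injective.injOn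
  have h1 : StrictMono (Nat.nth P) := Nat.nth_strictMono hPinf
  have h2 : StrictMono (fun n => g (Nat.nth Q n)) := hg.comp (Nat.nth_strictMono hQ)
  have hr : Nat.nth P = fun n => g (Nat.nth Q n) := by
    refine (h1.range_inj h2).1 ?_
    have : Set.range (fun n => g (Nat.nth Q n)) = g '' Set.range (Nat.nth Q) := by
      rw [← Set.range_comp]; rfl
    rw [Nat.range_nth_of_infinite hPinf, this, Nat.range_nth_of_infinite hQ]; exact hPQ
  exact congrFun hr n

/-- The sequence `x` spread over the `i`-th "column" of the pairing function. -/
noncomputable def spreadSeq {X : Type*} [Zero X] (x : ℕ → X) (i : ℕ) : ℕ → X :=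
  fun j => if (Nat.unpair j).1 = i then x (Nat.unpair j).2 else 0

lemma spreadSeq_pair {X : Type*} [Zero X] (x : ℕ → X) (i i' k : ℕ) :
    spreadSeq x i (Nat.pair i' k) = if i' = i then x k else 0 := by
  simp [spreadSeq, Nat.unpair_pair]

lemma pair_strictMono (i : ℕ) : StrictMono (fun k => Nat.pair i k) :=
  fun _ _ h => Nat.pair_lt_pair_right i h

lemma spreadSeq_ne_zero_iff {X : Type*} [Zero X] (x : ℕ → X) (i : ℕ) (j : ℕ) :
    spreadSeq x i j ≠ 0 ↔ ∃ k, x k ≠ 0 ∧ Nat.pair i k = j := by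
  constructor
  · intro hj
    by_cases h1 : (Nat.unpair j).1 = i
    · refine ⟨(Nat.unpair j).2, ?_, ?_⟩
      · simpa [spreadSeq, h1] using hj
      · rw [← h1, Nat.pair_unpair]
    · exact absurd hj (by simp [spreadSeq, h1])
  · rintro ⟨k, hk, rfl⟩
    simpa [spreadSeq_pair] using hk

lemma zeroFree_spreadSeq {X : Type*} [Zero X] (x : ℕ → X) (i : ℕ)
    (h : {j | x j ≠ 0}.Infinite) :
    zeroFree (spreadSeq x i) = zeroFree x := by
  have hQ : (setOf fun j => x j ≠ 0).Infinite := h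
  have hinf2 : {j | spreadSeq x i j ≠ 0}.Infinite := by
    have : {j | spreadSeq x i j ≠ 0} = (fun k => Nat.pair i k) '' {j | x j ≠ 0} := by
      ext j
      simpa [Set.mem_image] using spreadSeq_ne_zero_iff x i j
    rw [this]
    exact h.image (pair_strictMono i).injective.injOn
  rw [zeroFree, zeroFree, if_pos hinf2, if_pos h]
  funext n
  rw [nth_comp_strictMono (pair_strictMono i) hQ (spreadSeq_ne_zero_iff x i) n]
  simp [spreadSeq_pair]

lemma zeroFree_ne_zero {X : Type*} [Zero X] (x : ℕ → X)
    (h : {j | x j ≠ 0}.Infinite) : zeroFree x ≠ 0 := by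
  intro h0
  have hm : x (Nat.nth (fun j => x j ≠ 0) 0) ≠ 0 := Nat.nth_mem_of_infinite h 0
  apply hm
  have : zeroFree x 0 = 0 := by rw [h0]; rfl
  rwa [zeroFree, if_pos h] at this

end Aux

/-- **Theorem 3.8 (the weak case).**  If `E` is an invariant sequence space over `X`,
`(F_l)_{l ∈ Γ}` are strongly invariant sequence spaces over `𝕂` and `f : X → Y` is
strongly compatible with every `F_l^w(Y)`, then
`G^w(E, f, (F_l)) = {(x_j) ∈ E : (f(x_j)) ∉ ⋃_l F_l^w(Y)}` is either empty or spaceable. -/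
theorem spaceability_of_Gw {𝕂 X Y : Type*} [RCLike 𝕂]
    [NormedAddCommGroup X] [NormedSpace 𝕂 X] [CompleteSpace X]
    [NormedAddCommGroup Y] [NormedSpace 𝕂 Y] [CompleteSpace Y]
    {Γ : Type*} [Nonempty Γ]
    (E : InvariantSeqSpace 𝕂 X) (Fl : Γ → StronglyInvariantSeqSpace 𝕂 𝕂)
    (f : X → Y) (hf : ∀ l : Γ, StronglyCompatible f (Fl l).toInvariantSeqSpace) :
    {x : ℕ → X | x ∈ E.carrier ∧
        ∀ l : Γ, (fun j => f (x j)) ∉ weakSpace (Fl l).toInvariantSeqSpace Y} = ∅ ∨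
      Spaceable E {x : ℕ → X | x ∈ E.carrier ∧
        ∀ l : Γ, (fun j => f (x j)) ∉ weakSpace (Fl l).toInvariantSeqSpace Y} := by
  rcases Set.eq_empty_or_nonempty {x : ℕ → X | x ∈ E.carrier ∧
      ∀ l : Γ, (fun j => f (x j)) ∉ weakSpace (Fl l).toInvariantSeqSpace Y} with h | ⟨x, hx⟩
  · exact Or.inl h
  right
  obtain ⟨hxE, hxG⟩ := hx
  have l0 : Γ := Classical.arbitrary Γ
  -- `x` has infinitely many nonzero coordinates
  have hQinf : {j | x j ≠ 0}.Infinite := by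
    by_contra hfin
    rw [Set.not_infinite] at hfin
    apply hxG l0
    intro φ
    apply (Fl l0).c00_subset
    apply hfin.subset
    intro j hj
    simp only [Set.mem_setOf_eq] at hj ⊢
    intro hxj
    apply hj
    rw [hxj, (hf l0).1, map_zero]
  obtain ⟨k0, hk0⟩ : ∃ k0, x k0 ≠ 0 := hQinf.nonempty
  have hzfx : zeroFree x ≠ 0 := zeroFree_ne_zero x hQinf
  -- the submodule of "diagonal combinations"
  let W : Submodule 𝕂 (ℕ → X) :=
    { carrier := {z | ∃ a : ℕ → 𝕂, ∀ i k : ℕ, z (Nat.pair i k) = a i • x k}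
      add_mem' := by
        rintro z1 z2 ⟨a, ha⟩ ⟨b, hb⟩
        exact ⟨a + b, fun i k => by
          simp only [Pi.add_apply, ha i k, hb i k, add_smul]⟩
      zero_mem' := ⟨0, fun i k => by simp⟩
      smul_mem' := by
        rintro c z ⟨a, ha⟩
        exact ⟨c • a, fun i k => by
          simp only [Pi.smul_apply, ha i k, smul_smul, smul_eq_mul]⟩ }
  have hWmem : ∀ z : ℕ → X, z ∈ W ↔ ∃ a : ℕ → 𝕂, ∀ i k : ℕ, z (Nat.pair i k) = a i • x k :=
    fun z => Iff.rfl
  refine ⟨E.carrier ⊓ W, inf_le_left, ?_, ?_, ?_⟩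
  · -- infinite dimensionality
    intro hfin
    have hyE : ∀ i : ℕ, spreadSeq x i ∈ E.carrier := by
      intro i
      have hz : zeroFree (spreadSeq x i) ≠ 0 := by
        rw [zeroFree_spreadSeq x i hQinf]; exact hzfx
      rw [E.mem_iff_zeroFree_mem _ hz, zeroFree_spreadSeq x i hQinf]
      exact (E.mem_iff_zeroFree_mem x hzfx).1 hxE
    have hyV : ∀ i : ℕ, spreadSeq x i ∈ E.carrier ⊓ W := by
      intro i
      refine Submodule.mem_inf.2 ⟨hyE i, ⟨fun i' => if i' = i then (1 : 𝕂) else 0, ?_⟩⟩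
      intro i' k
      rw [spreadSeq_pair]
      by_cases h : i' = i <;> simp [h]
    have hind : LinearIndependent 𝕂 (fun i : ℕ => spreadSeq x i) := by
      rw [linearIndependent_iff']
      intro s g hsum i hi
      have hcf := congrFun hsum (Nat.pair i k0)
      simp only [Finset.sum_apply, Pi.smul_apply, Pi.zero_apply] at hcf
      rw [Finset.sum_eq_single i (fun i' _ hne => by
          rw [spreadSeq_pair, if_neg (fun h => hne h.symm), smul_zero])
        (fun h => absurd hi h)] at hcf
      rw [spreadSeq_pair, if_pos rfl] at hcf
      rcases smul_eq_zero.1 hcf with h | h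
      · exact h
      · exact absurd h hk0
    have hindV : LinearIndependent 𝕂
        (fun i : ℕ => (⟨spreadSeq x i, hyV i⟩ : (E.carrier ⊓ W : Submodule 𝕂 (ℕ → X)))) := by
      apply LinearIndependent.of_comp (E.carrier ⊓ W : Submodule 𝕂 (ℕ → X)).subtype
      exact hind
    exact Module.Finite.not_linearIndependent_of_infinite
      (fun i : ℕ => (⟨spreadSeq x i, hyV i⟩ : (E.carrier ⊓ W : Submodule 𝕂 (ℕ → X)))) hindV
  · -- contained in G ∪ {0}
    intro z hz
    rw [SetLike.mem_coe, Submodule.mem_inf] at hz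
    obtain ⟨hzE, a, ha⟩ := hz
    by_cases hz0 : z = 0
    · exact Or.inr hz0
    left
    refine ⟨hzE, fun l hmem => ?_⟩
    have hex : ∃ i0, a i0 ≠ 0 := by
      by_contra hcon
      push_neg at hcon
      apply hz0
      funext j
      have hj := ha (Nat.unpair j).1 (Nat.unpair j).2
      rw [Nat.pair_unpair] at hj
      rw [hj, hcon, zero_smul]; rfl
    obtain ⟨i0, hi0⟩ := hex
    have hφex : ∃ φ : Y →L[𝕂] 𝕂,
        (fun j => φ (f (x j))) ∉ (Fl l).toInvariantSeqSpace.carrier := by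
      by_contra hcon
      push_neg at hcon
      exact hxG l hcon
    obtain ⟨φ, hφ⟩ := hφex
    have h2 := (hf l).2 φ x (a i0) hi0 hφ
    have h3 : (fun j => φ (f (z j))) ∈ (Fl l).toInvariantSeqSpace.carrier := hmem φ
    have h4 := ((Fl l).mem_iff_subseq _).1 h3 (fun k => Nat.pair i0 k) (pair_strictMono i0)
    apply h2
    have heq : (fun k => (fun j => φ (f (z j))) ((fun k => Nat.pair i0 k) k)) =
        (fun j => φ (f (a i0 • x j))) := by
      funext k
      simp only [ha i0 k]
    rwa [heq] at h4
  · -- closedness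
    intro u hu z hzE hconv
    have huE : ∀ n, u n ∈ E.carrier := fun n => (Submodule.mem_inf.1 (hu n)).1
    have hc : ∀ n, ∃ a : ℕ → 𝕂, ∀ i k, u n (Nat.pair i k) = a i • x k :=
      fun n => (Submodule.mem_inf.1 (hu n)).2
    choose c hcspec using hc
    -- coordinatewise convergence
    have hcoord : ∀ j : ℕ, Filter.Tendsto (fun n => u n j) Filter.atTop (nhds (z j)) := by
      intro j
      rw [Metric.tendsto_atTop]
      intro ε hε
      obtain ⟨N, hN⟩ := hconv ε hε
      refine ⟨N, fun n hn => ?_⟩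
      have h1 := E.coord_norm_le (u n - z) (Submodule.sub_mem _ (huE n) hzE) j
      calc dist (u n j) (z j) = ‖(u n - z) j‖ := by rw [dist_eq_norm]; rfl
        _ ≤ E.norm (u n - z) := h1
        _ < ε := hN n hn
    obtain ⟨g, -, hg2⟩ := exists_dual_vector 𝕂 (x k0) (norm_ne_zero_iff.2 hk0)
    have hnorm : (‖x k0‖ : 𝕂) ≠ 0 := by
      simp [norm_eq_zero, hk0]
    set a : ℕ → 𝕂 := fun i => g (z (Nat.pair i k0)) / (‖x k0‖ : 𝕂) with ha
    have hci : ∀ i : ℕ, Filter.Tendsto (fun n => c n i) Filter.atTop (nhds (a i)) := by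
      intro i
      have t1 : Filter.Tendsto (fun n => g (u n (Nat.pair i k0))) Filter.atTop
          (nhds (g (z (Nat.pair i k0)))) :=
        (g.continuous.tendsto _).comp (hcoord (Nat.pair i k0))
      have t2 := t1.div_const ((‖x k0‖ : 𝕂))
      have hfun : (fun n => g (u n (Nat.pair i k0)) / (‖x k0‖ : 𝕂)) = fun n => c n i := by
        funext n
        rw [hcspec n i k0, map_smul, hg2, smul_eq_mul, mul_div_cancel_right₀ _ hnorm]
      rwa [hfun] at t2
    refine Submodule.mem_inf.2 ⟨hzE, ⟨a, ?_⟩⟩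
    intro i k
    have t1 : Filter.Tendsto (fun n => c n i • x k) Filter.atTop (nhds (a i • x k)) :=
      (hci i).smul_const (x k)
    have t2 : Filter.Tendsto (fun n => c n i • x k) Filter.atTop (nhds (z (Nat.pair i k))) := by
      have := hcoord (Nat.pair i k)
      have heq : (fun n => u n (Nat.pair i k)) = fun n => c n i • x k := by
        funext n; exact hcspec n i k
      rwa [heq] at this
    exact tendsto_nhds_unique t2 t1
end

section
/- Let X and Y be Banach spaces over 𝕂 (= ℝ or ℂ), let Γ be a nonempty set, let E be an invariant sequence space over X, for each l ∈ Γ let F_l be a strongly invariant sequence space over 𝕂, and let f : X → Y satisfy f(0) = 0. If x = (x_j)_{j=1}^∞ ∈ E satisfies (f(x_j))_{j=1}^∞ ∉ ⋃_{l∈Γ} F_l^w(Y), then x has infinitely many nonzero coordinates (so x⁰ ≠ 0), x⁰ ∈ E, and writing x⁰ = (x_{j_k})_{k=1}^∞ one has (f(x_{j_k}))_{k=1}^∞ ∉ ⋃_{l∈Γ} F_l^w(Y); that is, x⁰ ∈ G^w(E, f, (F_l)_{l∈Γ}). -/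
open scoped Classical

lemma zeroFree_eq_of_infinite {X : Type*} [Zero X] {x : ℕ → X}
    (h : {j | x j ≠ 0}.Infinite) :
    zeroFree x = fun k => x (Nat.nth (fun j => x j ≠ 0) k) := by
  simp only [zeroFree, if_pos h]

lemma zeroFree_ne_zero_of_infinite {X : Type*} [Zero X] {x : ℕ → X}
    (h : {j | x j ≠ 0}.Infinite) : zeroFree x ≠ 0 := by
  rw [zeroFree_eq_of_infinite h]
  intro h0
  have h1 : x (Nat.nth (fun j => x j ≠ 0) 0) ≠ 0 := Nat.nth_mem_of_infinite h 0
  exact h1 (congrFun h0 0)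

lemma mem_of_support_subset_aux {𝕂 : Type*} [RCLike 𝕂]
    (F : StronglyInvariantSeqSpace 𝕂 𝕂) (p : ℕ → Prop)
    (g : ℕ → 𝕂) (hsupp : ∀ j, g j ≠ 0 → p j)
    (hh : (fun k => g (Nat.nth p k)) ∈ F.carrier) : g ∈ F.carrier := by
  by_cases hfin : {j | g j ≠ 0}.Finite
  · exact F.c00_subset g hfin
  · have hTinf : {j | g j ≠ 0}.Infinite := hfin
    set q : ℕ → Prop := fun j => g j ≠ 0 with hq
    have hTinf' : (setOf q).Infinite := hTinf
    set m : ℕ → ℕ := fun k => Nat.count p (Nat.nth q k) with hm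
    have hpq : ∀ k, p (Nat.nth q k) := fun k =>
      hsupp _ (Nat.nth_mem_of_infinite hTinf' k)
    have hmmono : StrictMono m := fun a b hab =>
      Nat.count_strict_mono (hpq a) (Nat.nth_strictMono hTinf' hab)
    have hnth : ∀ k, Nat.nth p (m k) = Nat.nth q k := fun k =>
      Nat.nth_count (hpq k)
    have hzf : zeroFree g = fun k => (fun k => g (Nat.nth p k)) (m k) := by
      rw [zeroFree_eq_of_infinite hTinf]
      funext k
      simp only [hnth k]
      rfl
    have hzmem : zeroFree g ∈ F.carrier := by
      rw [hzf]
      exact (F.mem_iff_subseq _).mp hh m hmmono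
    exact (F.mem_iff_zeroFree_mem g (zeroFree_ne_zero_of_infinite hTinf)).mpr hzmem

/-- **Step 1 of the proof of Theorem 3.8.**  If `f 0 = 0` and
`x ∈ G^w(E, f, (F_l)_{l ∈ Γ})`, then `x` has infinitely many nonzero coordinates (so
`x⁰ ≠ 0`), `x⁰ ∈ E`, and `(f(x⁰_k))_k ∉ ⋃_l F_l^w(Y)`; that is,
`x⁰ ∈ G^w(E, f, (F_l))`. -/
theorem zeroFree_mem_Gw {𝕂 X Y : Type*} [RCLike 𝕂]
    [NormedAddCommGroup X] [NormedSpace 𝕂 X] [CompleteSpace X]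
    [NormedAddCommGroup Y] [NormedSpace 𝕂 Y] [CompleteSpace Y]
    {Γ : Type*} [Nonempty Γ]
    (E : InvariantSeqSpace 𝕂 X) (Fl : Γ → StronglyInvariantSeqSpace 𝕂 𝕂)
    (f : X → Y) (hf0 : f 0 = 0) (x : ℕ → X) (hxE : x ∈ E.carrier)
    (hx : ∀ l : Γ, (fun j => f (x j)) ∉ weakSpace (Fl l).toInvariantSeqSpace Y) :
    {j | x j ≠ 0}.Infinite ∧ zeroFree x ≠ 0 ∧ zeroFree x ∈ E.carrier ∧
      ∀ l : Γ, (fun k => f (zeroFree x k)) ∉ weakSpace (Fl l).toInvariantSeqSpace Y := by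
  have hinf : {j | x j ≠ 0}.Infinite := by
    by_contra hfin
    rw [Set.not_infinite] at hfin
    obtain ⟨l⟩ := ‹Nonempty Γ›
    apply hx l
    intro φ
    apply (Fl l).c00_subset
    apply hfin.subset
    intro j hj
    simp only [Set.mem_setOf_eq] at hj ⊢
    intro hxj
    apply hj
    rw [hxj, hf0, map_zero]
  have hne : zeroFree x ≠ 0 := zeroFree_ne_zero_of_infinite hinf
  have hmem : zeroFree x ∈ E.carrier := (E.mem_iff_zeroFree_mem x hne).mp hxE
  refine ⟨hinf, hne, hmem, ?_⟩
  intro l hw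
  apply hx l
  intro φ
  apply mem_of_support_subset_aux (Fl l) (fun j => x j ≠ 0)
  · intro j hj
    simp only at hj
    intro hxj
    apply hj
    rw [hxj, hf0, map_zero]
  · have := hw φ
    rw [zeroFree_eq_of_infinite hinf] at this
    exact this
end
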